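/- Let Λ be a semiring, let f = {f_n} : X → X' be a morphism of chain complexes of Λ-semimodules, and let E_f : X' --i_f--> C_f --p_f--> X[−1] be the mapping-cone Schreier short exact sequence, where (C_f)_n = X_{n−1} ⊕ X'_n, (i_f)_n(x') = (0, x'), (p_f)_n(x, x') = x, d_n⁺(x, x') = (∂_{n−1}⁻(x), ∂'_n⁺(x') + f_{n−1}(x)), and d_n⁻(x, x') = (∂_{n−1}⁺(x), ∂'_n⁻(x')). Then an element (x, x') ∈ X_{n−1} ⊕ X'_n is a representative of the level-n extension (E_f)_n if and only if x' has an additive inverse in X'_n. Consequently every differential d_n⁻ of C_f maps representatives of (E_f)_n to representatives of (E_f)_{n−1}. -/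

import Mathlib

/-- A chain complex of `Λ`-semimodules: `Λ`-semimodules `X n` (`n : ℤ`) together with
`Λ`-homomorphisms `dp n, dm n : X (n+1) → X n` (the positive and negative differentials
out of level `n+1`) satisfying `∂⁺∂⁺ + ∂⁻∂⁻ = ∂⁺∂⁻ + ∂⁻∂⁺`. -/
structure SComplex (Λ : Type*) [Semiring Λ] where
  X : ℤ → Type*
  [acm : ∀ n, AddCommMonoid (X n)]
  [mod : ∀ n, Module Λ (X n)]
  dp : ∀ n : ℤ, X (n + 1) →ₗ[Λ] X n
  dm : ∀ n : ℤ, X (n + 1) →ₗ[Λ] X n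
  chain : ∀ (n : ℤ) (x : X (n + 1 + 1)),
    dp n (dp (n + 1) x) + dm n (dm (n + 1) x) = dp n (dm (n + 1) x) + dm n (dp (n + 1) x)

attribute [instance] SComplex.acm SComplex.mod

/-- A morphism of chain complexes of `Λ`-semimodules: a family of `Λ`-homomorphisms
`f n : A.X n → B.X n` with `∂'⁺ f + f ∂⁻ = ∂'⁻ f + f ∂⁺`. -/
def IsMorphism {Λ : Type*} [Semiring Λ] (A B : SComplex Λ)
    (f : ∀ n, A.X n →ₗ[Λ] B.X n) : Prop :=
  ∀ (n : ℤ) (x : A.X (n + 1)),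
    B.dp n (f (n + 1) x) + f n (A.dm n x) = B.dm n (f (n + 1) x) + f n (A.dp n x)

/-- A ±-morphism of chain complexes: a family commuting separately with the positive and
negative differentials. -/
def IsPMMorphism {Λ : Type*} [Semiring Λ] (A B : SComplex Λ)
    (f : ∀ n, A.X n →ₗ[Λ] B.X n) : Prop :=
  ∀ (n : ℤ) (x : A.X (n + 1)),
    f n (A.dp n x) = B.dp n (f (n + 1) x) ∧ f n (A.dm n x) = B.dm n (f (n + 1) x)

/-- A Schreier extension of `Λ`-semimodules. -/
def IsSchreierExt {Λ A B C : Type*} [Semiring Λ] [AddCommMonoid A] [AddCommMonoid B]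
    [AddCommMonoid C] [Module Λ A] [Module Λ B] [Module Λ C]
    (l : A →ₗ[Λ] B) (t : B →ₗ[Λ] C) : Prop :=
  Function.Injective l ∧ Function.Surjective t ∧
    (∀ b : B, t b = 0 ↔ ∃ a : A, l a = b) ∧
    ∀ c : C, ∃ u : B, t u = c ∧ ∀ b : B, t b = c → ∃! a : A, b = l a + u

/-- A representative of a Schreier extension: `u : B` such that every element of the
fiber of `t` over `t u` is uniquely of the form `l a + u`. -/
def IsRep {Λ A B C : Type*} [Semiring Λ] [AddCommMonoid A] [AddCommMonoid B]
    [AddCommMonoid C] [Module Λ A] [Module Λ B] [Module Λ C]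
    (l : A →ₗ[Λ] B) (t : B →ₗ[Λ] C) (u : B) : Prop :=
  ∀ b : B, t b = t u → ∃! a : A, b = l a + u

/-- A Schreier short exact sequence of chain complexes of `Λ`-semimodules: a pair of
morphisms of chain complexes each of whose levels is a Schreier extension. -/
def IsSchreierSES {Λ : Type*} [Semiring Λ] (A B C : SComplex Λ)
    (κ : ∀ n, A.X n →ₗ[Λ] B.X n) (σ : ∀ n, B.X n →ₗ[Λ] C.X n) : Prop :=
  IsMorphism A B κ ∧ IsMorphism B C σ ∧ ∀ n, IsSchreierExt (κ n) (σ n)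

/-- The positive differential of the mapping cone of `f : X → X'`, mapping cone level
`p+2` (that is, `X (p+1) ⊕ X' (p+2)`) to cone level `p+1` (that is, `X p ⊕ X' (p+1)`):
`(x, x') ↦ (∂⁻ x, ∂'⁺ x' + f x)`. -/
def coneDp {Λ : Type*} [Semiring Λ] (X X' : SComplex Λ) (f : ∀ n, X.X n →ₗ[Λ] X'.X n)
    (p : ℤ) : X.X (p + 1) × X'.X (p + 1 + 1) → X.X p × X'.X (p + 1) :=
  fun z => (X.dm p z.1, X'.dp (p + 1) z.2 + f (p + 1) z.1)

/-- The negative differential of the mapping cone: `(x, x') ↦ (∂⁺ x, ∂'⁻ x')`. -/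
def coneDm {Λ : Type*} [Semiring Λ] (X X' : SComplex Λ) (p : ℤ) :
    X.X (p + 1) × X'.X (p + 1 + 1) → X.X p × X'.X (p + 1) :=
  fun z => (X.dp p z.1, X'.dm (p + 1) z.2)
/-- For the mapping-cone Schreier short exact sequence
`E_f : X' --i_f--> C_f --p_f--> X[−1]` of a morphism `f : X → X'` of chain complexes of
`Λ`-semimodules, an element `(x, x')` of a level of `C_f` is a representative of that
level of `E_f` iff `x'` has an additive inverse; consequently every negative
differential of `C_f` maps representatives to representatives. -/
theorem mappingCone_representatives
    {Λ : Type*} [Semiring Λ] (X X' : SComplex Λ)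
    (f : ∀ n, X.X n →ₗ[Λ] X'.X n) (hf : IsMorphism X X' f) :
    (∀ (p : ℤ) (u : X.X p × X'.X (p + 1)),
      IsRep (LinearMap.inr Λ (X.X p) (X'.X (p + 1)))
        (LinearMap.fst Λ (X.X p) (X'.X (p + 1))) u ↔
      ∃ y' : X'.X (p + 1), u.2 + y' = 0) ∧
    ∀ (p : ℤ) (u : X.X (p + 1) × X'.X (p + 1 + 1)),
      IsRep (LinearMap.inr Λ (X.X (p + 1)) (X'.X (p + 1 + 1)))
        (LinearMap.fst Λ (X.X (p + 1)) (X'.X (p + 1 + 1))) u →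
      IsRep (LinearMap.inr Λ (X.X p) (X'.X (p + 1)))
        (LinearMap.fst Λ (X.X p) (X'.X (p + 1))) (coneDm X X' p u) := by
  have key : ∀ (M N : Type _) [AddCommMonoid M] [AddCommMonoid N]
      [Module Λ M] [Module Λ N] (u : M × N),
      IsRep (LinearMap.inr Λ M N) (LinearMap.fst Λ M N) u ↔ ∃ y : N, u.2 + y = 0 := by
    intro M N _ _ _ _ u
    constructor
    · intro h
      obtain ⟨a, ha, -⟩ := h (u.1, 0) rfl
      exact ⟨a, by simpa [Prod.ext_iff, eq_comm, add_comm] using ha⟩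
    · rintro ⟨y, hy⟩ b hb
      simp only [LinearMap.fst_apply] at hb
      refine ⟨b.2 + y, ?_, ?_⟩
      · have : b.2 + y + u.2 = b.2 := by
          rw [add_assoc, add_comm y, hy, add_zero]
        simp [Prod.ext_iff, hb, this, eq_comm]
      · rintro a ha
        have h2 : b.2 = a + u.2 := congrArg Prod.snd ha
        calc a = a + (u.2 + y) := by rw [hy, add_zero]
          _ = (a + u.2) + y := by rw [add_assoc]
          _ = b.2 + y := by rw [h2]
  refine ⟨fun p u => key _ _ u, fun p u hu => ?_⟩
  rw [key] at hu ⊢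
  obtain ⟨y, hy⟩ := hu
  exact ⟨X'.dm (p+1) y, by simpa [coneDm] using congrArg (X'.dm (p+1)) hy⟩
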